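/- Let G be a connected graph and let C, C' be two cliques of G, regarded as vertices of the clique graph Cl(G). Then the graph distance in Cl(G) satisfies d_{Cl(G)}(C,C') = min{ d_G(x,x') : x ∈ C, x' ∈ C' } + 1, provided C ≠ C'. -/

import Mathlib

/-- A maximal clique (maximal complete subgraph) of `G`. -/
def IsMaxClique {V : Type*} (G : SimpleGraph V) (s : Set V) : Prop :=
  G.IsClique s ∧ ∀ t : Set V, G.IsClique t → s ⊆ t → s = t

/-- The clique graph: vertices are the maximal cliques of `G`, two cliques
are adjacent iff they are distinct and have nonempty intersection. -/
def cliqueGraph {V : Type*} (G : SimpleGraph V) :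
    SimpleGraph {s : Set V // IsMaxClique G s} where
  Adj C D := C ≠ D ∧ (C.1 ∩ D.1).Nonempty
  symm := by
    constructor
    rintro C D ⟨h1, h2⟩
    exact ⟨h1.symm, by rwa [Set.inter_comm]⟩
  loopless := ⟨fun C h => h.1 rfl⟩

/-- Every clique is contained in a maximal clique (Zorn). -/
lemma exists_maxClique {V : Type*} (G : SimpleGraph V) {t : Set V} (ht : G.IsClique t) :
    ∃ s : Set V, IsMaxClique G s ∧ t ⊆ s := by
  have hz : ∀ c ⊆ {s : Set V | G.IsClique s}, IsChain (· ⊆ ·) c → c.Nonempty →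
      ∃ ub ∈ {s : Set V | G.IsClique s}, ∀ s ∈ c, s ⊆ ub := by
    intro c hcS hchain hcne
    refine ⟨⋃₀ c, ?_, fun s hs => Set.subset_sUnion_of_mem hs⟩
    intro a ha b hb hab
    obtain ⟨s1, hs1, ha1⟩ := ha
    obtain ⟨s2, hs2, hb2⟩ := hb
    rcases hchain.total hs1 hs2 with h | h
    · exact hcS hs2 (h ha1) hb2 hab
    · exact hcS hs1 ha1 (h hb2) hab
  obtain ⟨m, htm, hm⟩ := zorn_subset_nonempty {s : Set V | G.IsClique s} hz t ht
  exact ⟨m, ⟨hm.1, fun u hu hmu => Set.Subset.antisymm hmu (hm.2 hu hmu)⟩, htm⟩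

/-- Two cliques sharing a vertex are at distance ≤ 1 in the clique graph:
there is a short walk between them. -/
lemma walk_of_G_walk {V : Type*} (G : SimpleGraph V) :
    ∀ {x x' : V} (p : G.Walk x x') (C C' : {s : Set V // IsMaxClique G s}),
      x ∈ C.1 → x' ∈ C'.1 →
      ∃ w : (cliqueGraph G).Walk C C', w.length ≤ p.length + 1 := by
  intro x x' p
  induction p with
  | @nil u =>
    intro C C' hx hx'
    by_cases h : C = C'
    · subst h; exact ⟨.nil, by simp⟩
    · exact ⟨.cons ⟨h, u, hx, hx'⟩ .nil, le_rfl⟩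
  | @cons a b c hab q ih =>
    intro C C' hx hx'
    obtain ⟨D, hD, hsub⟩ := exists_maxClique G (SimpleGraph.isClique_pair.2 fun _ => hab)
    have ha : a ∈ D := hsub (Set.mem_insert _ _)
    have hb : b ∈ D := hsub (Set.mem_insert_of_mem _ rfl)
    obtain ⟨w', hw'⟩ := ih ⟨D, hD⟩ C' hb hx'
    by_cases h : C = (⟨D, hD⟩ : {s : Set V // IsMaxClique G s})
    · subst h
      exact ⟨w', by simpa using hw'.trans (by omega)⟩
    · exact ⟨.cons ⟨h, a, hx, ha⟩ w', Nat.succ_le_succ hw'⟩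

lemma dist_of_cl_walk {V : Type*} (G : SimpleGraph V) (hG : G.Connected) :
    ∀ {D C' : {s : Set V // IsMaxClique G s}} (w : (cliqueGraph G).Walk D C') (x : V),
      x ∈ D.1 → ∃ x' ∈ C'.1, G.dist x x' ≤ w.length := by
  intro D C' w
  induction w with
  | nil => exact fun x hx => ⟨x, hx, by simp⟩
  | @cons D E C'' hDE w' ih =>
    intro x hx
    obtain ⟨y, hyD, hyE⟩ := hDE.2
    obtain ⟨x', hx', hd⟩ := ih y hyE
    refine ⟨x', hx', ?_⟩
    have h1 : G.dist x y ≤ 1 := by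
      by_cases hxy : x = y
      · subst hxy; simp [SimpleGraph.dist_self]
      · exact G.dist_le (SimpleGraph.Walk.cons (D.2.1 hx hyD hxy) .nil)
    calc G.dist x x' ≤ G.dist x y + G.dist y x' := hG.dist_triangle
      _ ≤ 1 + w'.length := Nat.add_le_add h1 hd
      _ = (SimpleGraph.Walk.cons hDE w').length := by simp [Nat.add_comm]
    
/-- For a connected graph `G` and distinct cliques `C ≠ C'`, the distance in
the clique graph satisfies
`d_{Cl(G)}(C,C') = min { d_G(x,x') : x ∈ C, x' ∈ C' } + 1`. -/
theorem stmt_2 {V : Type*} (G : SimpleGraph V) (hG : G.Connected)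
    (C C' : {s : Set V // IsMaxClique G s}) (hne : C ≠ C') :
    (cliqueGraph G).dist C C' =
      sInf {n : ℕ | ∃ x ∈ C.1, ∃ x' ∈ C'.1, G.dist x x' = n} + 1 := by
  -- C and C' are nonempty
  have hCne : C.1.Nonempty := by
    rw [Set.nonempty_iff_ne_empty]
    intro h
    have := C.2.2 C'.1 C'.2.1 (by simp [h])
    exact hne (Subtype.ext this)
  have hC'ne : C'.1.Nonempty := by
    rw [Set.nonempty_iff_ne_empty]
    intro h
    have := C'.2.2 C.1 C.2.1 (by simp [h])
    exact hne (Subtype.ext this.symm)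
  obtain ⟨a, ha⟩ := hCne
  obtain ⟨b, hb⟩ := hC'ne
  set S : Set ℕ := {n : ℕ | ∃ x ∈ C.1, ∃ x' ∈ C'.1, G.dist x x' = n} with hS
  have hSne : S.Nonempty := ⟨G.dist a b, a, ha, b, hb, rfl⟩
  have hmem := Nat.sInf_mem hSne
  obtain ⟨x, hx, x', hx', hdist⟩ := hmem
  -- upper bound
  obtain ⟨p, hp⟩ := (hG x x').exists_walk_length_eq_dist
  obtain ⟨w, hw⟩ := walk_of_G_walk G p C C' hx hx'
  have hub : (cliqueGraph G).dist C C' ≤ sInf S + 1 := by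
    calc (cliqueGraph G).dist C C' ≤ w.length := (cliqueGraph G).dist_le w
      _ ≤ p.length + 1 := hw
      _ = sInf S + 1 := by rw [hp, hdist]
  -- lower bound
  have hreach : (cliqueGraph G).Reachable C C' := ⟨w⟩
  obtain ⟨w0, hw0⟩ := hreach.exists_walk_length_eq_dist
  have hlb : sInf S + 1 ≤ (cliqueGraph G).dist C C' := by
    cases w0 with
    | nil => exact absurd rfl hne
    | @cons _ E _ hCE w' =>
      obtain ⟨y, hyC, hyE⟩ := hCE.2
      obtain ⟨y', hy', hd⟩ := dist_of_cl_walk G hG w' y hyE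
      have h1 : sInf S ≤ G.dist y y' := Nat.sInf_le ⟨y, hyC, y', hy', rfl⟩
      have h2 : w'.length + 1 = (cliqueGraph G).dist C C' := by simpa using hw0
      omega
  omega
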